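/- Let A_1 = (0,0), A_2 = (1,0), A_3 = (0,1) in ℝ², and for i = 1, 2, 3 let f_i : ℝ² → ℝ² be defined by f_i(x) = (x + A_i)/2, so that f_i is the contraction of the plane by factor 1/2 with fixed point A_i. Then there exists a unique nonempty compact set S ⊆ ℝ² (the Sierpinski triangle) such that S = f_1(S) ∪ f_2(S) ∪ f_3(S). -/

import Mathlib

open Metric EMetric Set Function TopologicalSpace

/-- Hausdorff edistance of images under a Lipschitz map. -/
lemma haus_image_le {E : Type*} [PseudoEMetricSpace E] {K : NNReal} {f : E → E}
    (hf : LipschitzWith K f) (s t : Set E) (hs : IsCompact s) (ht : IsCompact t)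
    (hsne : s.Nonempty) (htne : t.Nonempty) :
    hausdorffEdist (f '' s) (f '' t) ≤ K * hausdorffEdist s t := by
  apply hausdorffEdist_le_of_mem_edist
  · rintro _ ⟨x, hx, rfl⟩
    obtain ⟨y, hy, hxy⟩ := ht.exists_infEdist_eq_edist htne x
    refine ⟨f y, mem_image_of_mem f hy, (hf x y).trans ?_⟩
    rw [← hxy]
    exact mul_le_mul_right (infEdist_le_hausdorffEdist_of_mem hx) _
  · rintro _ ⟨x, hx, rfl⟩
    obtain ⟨y, hy, hxy⟩ := hs.exists_infEdist_eq_edist hsne x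
    refine ⟨f y, mem_image_of_mem f hy, (hf x y).trans (mul_le_mul_right ?_ _)⟩
    rw [← hxy, show hausdorffEdist s t = hausdorffEdist t s from hausdorffEdist_comm]
    exact infEdist_le_hausdorffEdist_of_mem hx

lemma haus_iUnion_le {E : Type*} [PseudoEMetricSpace E] {ι : Type*} (s t : ι → Set E)
    (d : ENNReal) (h : ∀ i, hausdorffEdist (s i) (t i) ≤ d) :
    hausdorffEdist (⋃ i, s i) (⋃ i, t i) ≤ d := by
  apply hausdorffEdist_le_of_infEdist
  · rintro x hx
    obtain ⟨i, hi⟩ := mem_iUnion.1 hx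
    exact le_trans (infEdist_anti (subset_iUnion t i))
      ((infEdist_le_hausdorffEdist_of_mem hi).trans (h i))
  · rintro x hx
    obtain ⟨i, hi⟩ := mem_iUnion.1 hx
    refine le_trans (infEdist_anti (subset_iUnion s i)) ?_
    refine (infEdist_le_hausdorffEdist_of_mem hi).trans ?_
    rw [hausdorffEdist_comm]
    exact h i

/-- The Sierpinski triangle: with `A 1 = (0,0)`, `A 2 = (1,0)`, `A 3 = (0,1)` and
`f i x = (x + A i) / 2` (the contraction by factor 1/2 with fixed point `A i`),
there is a unique nonempty compact set `S ⊆ ℝ²` with `S = f 1 '' S ∪ f 2 '' S ∪ f 3 '' S`. -/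
theorem exists_unique_sierpinski_triangle :
    ∃! S : Set (ℝ × ℝ), S.Nonempty ∧ IsCompact S ∧
      S = ⋃ i : Fin 3,
        (fun x : ℝ × ℝ => ((1 : ℝ) / 2) • (x + ![((0 : ℝ), (0 : ℝ)), (1, 0), (0, 1)] i)) '' S := by
  set f : Fin 3 → (ℝ × ℝ) → (ℝ × ℝ) :=
    fun i x => ((1 : ℝ) / 2) • (x + ![((0 : ℝ), (0 : ℝ)), (1, 0), (0, 1)] i) with hf
  have hlip : ∀ i, LipschitzWith (1/2) (f i) := by
    intro i
    apply LipschitzWith.of_dist_le_mul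
    intro x y
    simp only [hf]
    rw [dist_smul₀, dist_add_right]
    apply mul_le_mul_of_nonneg_right _ dist_nonneg
    rw [Real.norm_eq_abs, abs_of_nonneg (by norm_num : (0:ℝ) ≤ 1/2)]
    push_cast
    norm_num
  have hcont : ∀ i, Continuous (f i) := fun i => (hlip i).continuous
  -- the map on nonempty compacts
  set F : NonemptyCompacts (ℝ × ℝ) → NonemptyCompacts (ℝ × ℝ) :=
    fun K => ⟨⟨⋃ i, f i '' (K : Set (ℝ × ℝ)),
      isCompact_iUnion fun i => K.isCompact.image (hcont i)⟩,
      ⟨f 0 K.nonempty.choose, mem_iUnion.2 ⟨0, mem_image_of_mem _ K.nonempty.choose_spec⟩⟩⟩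
    with hFdef
  have hFcarrier : ∀ K : NonemptyCompacts (ℝ × ℝ),
      (F K : Set (ℝ × ℝ)) = ⋃ i, f i '' (K : Set (ℝ × ℝ)) := fun _ => rfl
  have hcontr : ContractingWith (1/2) F := by
    constructor
    · rw [← NNReal.coe_lt_coe]
      norm_num
    · intro K L
      show hausdorffEdist (F K : Set (ℝ × ℝ)) (F L) ≤ _
      rw [hFcarrier, hFcarrier]
      apply haus_iUnion_le
      intro i
      exact haus_image_le (hlip i) _ _ K.isCompact L.isCompact K.nonempty L.nonempty
  obtain ⟨S, hSfix, -⟩ := hcontr.exists_fixedPoint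
    ⟨⟨{(0,0)}, isCompact_singleton⟩, singleton_nonempty _⟩ (edist_ne_top _ _)
  refine ⟨(S : Set (ℝ × ℝ)), ⟨S.nonempty, S.isCompact, ?_⟩, ?_⟩
  · conv_lhs => rw [← hSfix]
    rw [hFcarrier]
  · rintro T ⟨hTne, hTc, hTeq⟩
    set T' : NonemptyCompacts (ℝ × ℝ) := ⟨⟨T, hTc⟩, hTne⟩ with hT'
    have hT'fix : Function.IsFixedPt F T' := by
      apply NonemptyCompacts.ext
      rw [hFcarrier]
      exact hTeq.symm
    have := hcontr.eq_or_edist_eq_top_of_fixedPoints hT'fix hSfix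
    rcases this with h | h
    · rw [← h]; rfl
    · exact absurd h (edist_ne_top _ _)
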